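/- Let Δ be a Hermitian operator on (ℂ^n)^{⊗k}. Then ∫⋯∫ (tr(Δ (|ψ_1⟩⟨ψ_1| ⊗ ⋯ ⊗ |ψ_k⟩⟨ψ_k|)))² dψ_1 ⋯ dψ_k = (n(n+1))^{−k} Σ_{S ⊆ [k]} ‖tr_S Δ‖_2², where each integral is over the uniform (unitarily invariant) probability measure on the unit vectors of ℂ^n. -/

import Mathlib

noncomputable section

open MeasureTheory Matrix
open scoped ComplexConjugate

instance {n : ℕ} : MeasurableSpace (EuclideanSpace ℂ (Fin n)) := MeasurableSpace.comap WithLp.ofLp MeasurableSpace.pi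
instance {n : ℕ} : BorelSpace (EuclideanSpace ℂ (Fin n)) := PiLp.borelSpace _

/-- The tensor product `|ψ_1⟩⟨ψ_1| ⊗ ⋯ ⊗ |ψ_k⟩⟨ψ_k|` of rank-one projectors, as a matrix
on `(ℂ^n)^{⊗k}` (indexed by functions `Fin k → Fin n`). -/
def prodProj {n k : ℕ} (ψ : Fin k → EuclideanSpace ℂ (Fin n)) :
    Matrix (Fin k → Fin n) (Fin k → Fin n) ℂ :=
  Matrix.of fun a b => ∏ j, (ψ j (a j) * (starRingEnd ℂ) (ψ j (b j)))

/-- The partial trace over the tensor factors indexed by `S ⊆ {1,…,k}` of an operator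
on `(ℂ^n)^{⊗k}`, an operator on the remaining factors. -/
def partialTrace {n k : ℕ} (S : Finset (Fin k))
    (X : Matrix (Fin k → Fin n) (Fin k → Fin n) ℂ) :
    Matrix ({j : Fin k // j ∉ S} → Fin n) ({j : Fin k // j ∉ S} → Fin n) ℂ :=
  Matrix.of fun a b => ∑ c : {j : Fin k // j ∈ S} → Fin n,
    X (fun j => if h : j ∈ S then c ⟨j, h⟩ else a ⟨j, h⟩)
      (fun j => if h : j ∈ S then c ⟨j, h⟩ else b ⟨j, h⟩)

namespace SM

abbrev E (n : ℕ) := EuclideanSpace ℂ (Fin n)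
abbrev Sp (n : ℕ) := Metric.sphere (0 : E n) 1
variable {n : ℕ}

def mono (a b c d : Fin n) (ψ : Sp n) : ℂ :=
  ((ψ : E n) b * (starRingEnd ℂ) ((ψ : E n) a)) * ((ψ : E n) d * (starRingEnd ℂ) ((ψ : E n) c))

lemma continuous_coord (i : Fin n) : Continuous fun ψ : Sp n => (ψ : E n) i :=
  (EuclideanSpace.proj (𝕜 := ℂ) i).continuous.comp continuous_subtype_val

lemma continuous_mono (a b c d : Fin n) : Continuous (mono a b c d) := by
  unfold mono
  simp only [starRingEnd_apply]
  exact (((continuous_coord b).mul (continuous_coord a).star).mul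
    ((continuous_coord d).mul (continuous_coord c).star))

lemma integrable_of_continuous {X : Type*} [TopologicalSpace X] [CompactSpace X] [T2Space X]
    [MeasurableSpace X] [OpensMeasurableSpace X]
    (ν : Measure X) [IsFiniteMeasure ν] {f : X → ℂ} (hf : Continuous f) : Integrable f ν := by
  have := hf.continuousOn.integrableOn_compact (μ := ν) isCompact_univ
  rwa [integrableOn_univ] at this

lemma integrable_mono (μ : Measure (Sp n)) [IsProbabilityMeasure μ] (a b c d : Fin n) :
    Integrable (mono a b c d) μ :=
  integrable_of_continuous μ (continuous_mono a b c d)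

lemma sum_conj (ψ : Sp n) : ∑ a, (ψ : E n) a * (starRingEnd ℂ) ((ψ : E n) a) = 1 := by
  have h1 : ‖(ψ : E n)‖ = 1 := mem_sphere_zero_iff_norm.1 ψ.2
  have h2 : ∀ a, (ψ : E n) a * (starRingEnd ℂ) ((ψ : E n) a)
      = ((‖(ψ : E n) a‖ ^ 2 : ℝ) : ℂ) := by
    intro a
    rw [Complex.mul_conj']
    norm_cast
  simp_rw [h2]
  rw [← Complex.ofReal_sum]
  norm_cast
  have := EuclideanSpace.norm_eq (ψ : E n)
  rw [h1] at this
  have h3 : (0:ℝ) ≤ ∑ i, ‖(ψ : E n) i‖ ^ 2 :=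
    Finset.sum_nonneg fun i _ => sq_nonneg _
  nlinarith [Real.sq_sqrt h3, Real.sqrt_nonneg (∑ i, ‖(ψ : E n) i‖ ^ 2)]


lemma hs2 : (Real.sqrt 2 : ℂ) * (Real.sqrt 2 : ℂ) = 2 := by
  rw [← Complex.ofReal_mul, Real.mul_self_sqrt (by norm_num : (0:ℝ) ≤ 2)]
  norm_num

lemma hs0 : (Real.sqrt 2 : ℂ) ≠ 0 := by
  have h2 := hs2
  intro h; rw [h, mul_zero] at h2; exact (by norm_num : (0:ℂ) ≠ 2) h2

lemma normsq (z : ℂ) : ‖z‖ ^ 2 = Complex.normSq z := by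
  rw [Complex.sq_norm]

lemma parallel (x y : ℂ) :
    ‖(x + y) / (Real.sqrt 2 : ℂ)‖ ^ 2 + ‖(x - y) / (Real.sqrt 2 : ℂ)‖ ^ 2
      = ‖x‖ ^ 2 + ‖y‖ ^ 2 := by
  have hn : ‖((Real.sqrt 2 : ℝ) : ℂ)‖ = Real.sqrt 2 := by
    rw [Complex.norm_real, Real.norm_eq_abs, abs_of_nonneg (Real.sqrt_nonneg 2)]
  rw [norm_div, norm_div, hn, div_pow, div_pow, Real.sq_sqrt (by norm_num : (0:ℝ) ≤ 2),
    normsq, normsq, normsq, normsq]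
  simp only [Complex.normSq_apply, Complex.add_re, Complex.add_im, Complex.sub_re,
    Complex.sub_im]
  ring

def hadFun (i0 i1 : Fin n) (ψ : E n) : E n := WithLp.toLp 2 fun j =>
  if j = i0 then (ψ i0 + ψ i1) / (Real.sqrt 2 : ℂ)
  else if j = i1 then (ψ i0 - ψ i1) / (Real.sqrt 2 : ℂ) else ψ j

lemma hadFun_i0 (i0 i1 : Fin n) (ψ : E n) :
    hadFun i0 i1 ψ i0 = (ψ i0 + ψ i1) / (Real.sqrt 2 : ℂ) := by simp [hadFun]

lemma hadFun_i1 (i0 i1 : Fin n) (hne : i0 ≠ i1) (ψ : E n) :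
    hadFun i0 i1 ψ i1 = (ψ i0 - ψ i1) / (Real.sqrt 2 : ℂ) := by
  simp [hadFun, Ne.symm hne]

lemma hadFun_other (i0 i1 : Fin n) (ψ : E n) (j : Fin n) (h0 : j ≠ i0) (h1 : j ≠ i1) :
    hadFun i0 i1 ψ j = ψ j := by simp [hadFun, h0, h1]

lemma hadFun_invol (i0 i1 : Fin n) (hne : i0 ≠ i1) (ψ : E n) :
    hadFun i0 i1 (hadFun i0 i1 ψ) = ψ := by
  ext j
  by_cases h0 : j = i0
  · subst h0
    rw [hadFun_i0, hadFun_i0, hadFun_i1 _ _ hne, ← add_div, div_div, hs2]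
    ring
  · by_cases h1 : j = i1
    · subst h1
      rw [hadFun_i1 _ _ hne, hadFun_i0, hadFun_i1 _ _ hne, div_sub_div_same, div_div, hs2]
      ring
    · rw [hadFun_other _ _ _ _ h0 h1, hadFun_other _ _ _ _ h0 h1]

lemma hadFun_sum (i0 i1 : Fin n) (hne : i0 ≠ i1) (ψ : E n) :
    ∑ j, ‖hadFun i0 i1 ψ j‖ ^ 2 = ∑ j, ‖ψ j‖ ^ 2 := by
  have key : ∀ g : Fin n → ℝ, ∑ j, g j
      = g i0 + (g i1 + ∑ j ∈ (Finset.univ.erase i0).erase i1, g j) := by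
    intro g
    rw [Finset.add_sum_erase _ g (by simp [Ne.symm hne]), Finset.add_sum_erase _ g (by simp)]
  rw [key (fun j => ‖hadFun i0 i1 ψ j‖ ^ 2), key (fun j => ‖ψ j‖ ^ 2)]
  have hrest : ∑ j ∈ (Finset.univ.erase i0).erase i1, ‖hadFun i0 i1 ψ j‖ ^ 2
      = ∑ j ∈ (Finset.univ.erase i0).erase i1, ‖ψ j‖ ^ 2 := by
    apply Finset.sum_congr rfl
    intro j hj
    simp only [Finset.mem_erase] at hj
    rw [hadFun_other _ _ _ _ hj.2.1 hj.1]
  rw [hrest, hadFun_i0, hadFun_i1 _ _ hne]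
  have := parallel (ψ i0) (ψ i1)
  linarith

/-- Hadamard-type rotation mixing coordinates `i0` and `i1`. -/
def hadU (i0 i1 : Fin n) (hne : i0 ≠ i1) : E n ≃ₗᵢ[ℂ] E n where
  toLinearEquiv :=
  { toFun := hadFun i0 i1
    invFun := hadFun i0 i1
    map_add' := by
      intro x y; ext j
      show hadFun i0 i1 (x + y) j = hadFun i0 i1 x j + hadFun i0 i1 y j
      by_cases h0 : j = i0
      · subst h0; rw [hadFun_i0, hadFun_i0, hadFun_i0]
        simp only [PiLp.add_apply]; ring
      · by_cases h1 : j = i1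
        · subst h1; rw [hadFun_i1 _ _ hne, hadFun_i1 _ _ hne, hadFun_i1 _ _ hne]
          simp only [PiLp.add_apply]; ring
        · rw [hadFun_other _ _ _ _ h0 h1, hadFun_other _ _ _ _ h0 h1,
            hadFun_other _ _ _ _ h0 h1]
          simp [PiLp.add_apply]
    map_smul' := by
      intro c x; ext j
      show hadFun i0 i1 (c • x) j = c * hadFun i0 i1 x j
      by_cases h0 : j = i0
      · subst h0; rw [hadFun_i0, hadFun_i0]
        simp only [PiLp.smul_apply, smul_eq_mul]; ring
      · by_cases h1 : j = i1
        · subst h1; rw [hadFun_i1 _ _ hne, hadFun_i1 _ _ hne]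
          simp only [PiLp.smul_apply, smul_eq_mul]; ring
        · rw [hadFun_other _ _ _ _ h0 h1, hadFun_other _ _ _ _ h0 h1]
          simp [PiLp.smul_apply]
    left_inv := hadFun_invol i0 i1 hne
    right_inv := hadFun_invol i0 i1 hne }
  norm_map' := by
    intro ψ
    rw [EuclideanSpace.norm_eq, EuclideanSpace.norm_eq]
    exact congrArg Real.sqrt (hadFun_sum i0 i1 hne ψ)

lemma hadU_apply (i0 i1 : Fin n) (hne : i0 ≠ i1) (ψ : E n) :
    hadU i0 i1 hne ψ = hadFun i0 i1 ψ := rfl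



def phaseU (z : Fin n → ℂ) (hz : ∀ j, ‖z j‖ = 1) : E n ≃ₗᵢ[ℂ] E n where
  toLinearEquiv :=
  { toFun := fun ψ => WithLp.toLp 2 fun j => z j * ψ j
    invFun := fun ψ => WithLp.toLp 2 fun j => (starRingEnd ℂ) (z j) * ψ j
    map_add' := by intro x y; ext j; simp [mul_add]
    map_smul' := by intro c x; ext j; simp [smul_eq_mul]; ring
    left_inv := by
      intro ψ; ext j
      have h : (starRingEnd ℂ) (z j) * z j = 1 := by
        rw [mul_comm, Complex.mul_conj']
        rw [show ‖z j‖ = 1 from hz j]; norm_num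
      show (starRingEnd ℂ) (z j) * (z j * ψ j) = ψ j
      rw [← mul_assoc, h, one_mul]
    right_inv := by
      intro ψ; ext j
      have h : z j * (starRingEnd ℂ) (z j) = 1 := by
        rw [Complex.mul_conj']
        rw [show ‖z j‖ = 1 from hz j]; norm_num
      show z j * ((starRingEnd ℂ) (z j) * ψ j) = ψ j
      rw [← mul_assoc, h, one_mul] }
  norm_map' := by
    intro ψ
    rw [EuclideanSpace.norm_eq, EuclideanSpace.norm_eq]
    congr 1
    apply Finset.sum_congr rfl
    intro j _
    show ‖z j * ψ j‖ ^ 2 = ‖ψ j‖ ^ 2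
    rw [norm_mul, hz j, one_mul]

lemma phaseU_apply (z : Fin n → ℂ) (hz : ∀ j, ‖z j‖ = 1) (ψ : E n) (j : Fin n) :
    (phaseU z hz ψ) j = z j * ψ j := rfl


def Inv (μ : Measure (Sp n)) : Prop :=
  ∀ U : E n ≃ₗᵢ[ℂ] E n,
    Measure.map (fun ψ : Sp n =>
      (⟨U ψ.1, by
        rw [mem_sphere_zero_iff_norm, U.norm_map, ← mem_sphere_zero_iff_norm]
        exact ψ.2⟩ : Sp n)) μ = μ

def sphereMap (U : E n ≃ₗᵢ[ℂ] E n) (ψ : Sp n) : Sp n :=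
  ⟨U ψ.1, by
    rw [mem_sphere_zero_iff_norm, U.norm_map, ← mem_sphere_zero_iff_norm]
    exact ψ.2⟩

lemma continuous_sphereMap (U : E n ≃ₗᵢ[ℂ] E n) : Continuous (sphereMap (n := n) U) :=
  Continuous.subtype_mk (U.continuous.comp continuous_subtype_val) _

lemma integral_comp_U (μ : Measure (Sp n)) [IsProbabilityMeasure μ] (hinv : Inv μ)
    (U : E n ≃ₗᵢ[ℂ] E n) (f : Sp n → ℂ) (hf : Continuous f) :
    ∫ ψ, f (sphereMap U ψ) ∂μ = ∫ ψ, f ψ ∂μ := by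
  conv_rhs => rw [← hinv U]
  exact (integral_map (φ := sphereMap U) (continuous_sphereMap U).aemeasurable
    hf.aestronglyMeasurable).symm


lemma I_ne_one : Complex.I ≠ 1 := by
  intro h
  have := congrArg Complex.im h
  simp at this

section Moments

variable (μ : Measure (Sp n)) [IsProbabilityMeasure μ]

def mom (a b c d : Fin n) : ℂ := ∫ ψ, mono a b c d ψ ∂μ

lemma phase_rel (hinv : Inv μ) (z : Fin n → ℂ) (hz : ∀ j, ‖z j‖ = 1) (a b c d : Fin n) :
    mom μ a b c d
      = (z b * (starRingEnd ℂ) (z a) * (z d * (starRingEnd ℂ) (z c))) * mom μ a b c d := by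
  conv_lhs => rw [mom, ← integral_comp_U μ hinv (phaseU z hz) _ (continuous_mono a b c d)]
  have hpt : ∀ ψ : Sp n, mono a b c d (sphereMap (phaseU z hz) ψ)
      = (z b * (starRingEnd ℂ) (z a) * (z d * (starRingEnd ℂ) (z c))) * mono a b c d ψ := by
    intro ψ
    show (phaseU z hz ψ.1) b * (starRingEnd ℂ) ((phaseU z hz ψ.1) a)
        * ((phaseU z hz ψ.1) d * (starRingEnd ℂ) ((phaseU z hz ψ.1) c)) = _
    rw [phaseU_apply, phaseU_apply, phaseU_apply, phaseU_apply, _root_.map_mul, _root_.map_mul]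
    unfold mono
    ring
  simp_rw [hpt]
  rw [integral_const_mul]
  rfl

lemma cancel_ne_one {w m : ℂ} (h : m = w * m) (hw : w ≠ 1) : m = 0 := by
  have h1 : (w - 1) * m = 0 := by linear_combination -h
  rcases mul_eq_zero.1 h1 with h2 | h2
  · exact absurd (sub_eq_zero.1 h2) hw
  · exact h2

lemma mom_vanish (hinv : Inv μ) (a b c d : Fin n)
    (h : ¬((a = b ∧ c = d) ∨ (a = d ∧ c = b))) : mom μ a b c d = 0 := by
  push_neg at h
  obtain ⟨h1, h2⟩ := h
  have mkz : ∀ i : Fin n, ∀ j, ‖(if j = i then Complex.I else (1:ℂ))‖ = 1 := by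
    intro i j; by_cases hj : j = i <;> simp [hj]
  by_cases hab : a = b
  · -- then c ≠ d; take i = d
    have hcd : c ≠ d := h1 hab
    apply cancel_ne_one (phase_rel μ hinv (fun j => if j = d then Complex.I else 1) (mkz d) a b c d)
    subst hab
    by_cases had : a = d
    · simp [had, hcd, Complex.conj_I, I_ne_one]
    · simp [had, hcd, Complex.conj_I, I_ne_one]
  · by_cases hcb : c = b
    · have had : a ≠ d := fun hd => h2 hd hcb
      by_cases hdb : d = b
      · -- i = b
        apply cancel_ne_one (phase_rel μ hinv (fun j => if j = b then Complex.I else 1) (mkz b) a b c d)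
        simp [hab, hcb, hdb, Complex.conj_I]
        intro hc; simp [Complex.ext_iff] at hc
      · -- i = d
        apply cancel_ne_one (phase_rel μ hinv (fun j => if j = d then Complex.I else 1) (mkz d) a b c d)
        have hbd : b ≠ d := fun hh => hdb hh.symm
        have hcd : c ≠ d := hcb ▸ hbd
        simp [hbd, had, hcd, I_ne_one]
    · -- i = b
      apply cancel_ne_one (phase_rel μ hinv (fun j => if j = b then Complex.I else 1) (mkz b) a b c d)
      by_cases hdb : d = b
      · simp [hab, hcb, hdb, Complex.conj_I]
        intro hc
        norm_num at hc
      · simp [hab, hcb, hdb, I_ne_one]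

lemma mom_swap1 (i0 i1 : Fin n) : mom μ i0 i1 i1 i0 = mom μ i0 i0 i1 i1 := by
  unfold mom
  congr 1
  funext ψ
  unfold mono
  ring

lemma mom_swap2 (i0 i1 : Fin n) : mom μ i1 i0 i0 i1 = mom μ i0 i0 i1 i1 := by
  unfold mom
  congr 1
  funext ψ
  unfold mono
  ring

lemma mom_swap3 (i0 i1 : Fin n) : mom μ i1 i1 i0 i0 = mom μ i0 i0 i1 i1 := by
  unfold mom
  congr 1
  funext ψ
  unfold mono
  ring

lemma had_rel (hinv : Inv μ) (i0 i1 : Fin n) (hne : i0 ≠ i1) :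
    4 * mom μ i0 i0 i0 i0
      = mom μ i0 i0 i0 i0 + mom μ i1 i1 i1 i1 + 4 * mom μ i0 i0 i1 i1 := by
  classical
  have hpt : ∀ ψ : Sp n, mono i0 i0 i0 i0 (sphereMap (hadU i0 i1 hne) ψ)
      = ∑ t : Fin 2 × Fin 2 × Fin 2 × Fin 2,
          (1/4 : ℂ) * mono (![i0, i1] t.1) (![i0, i1] t.2.1) (![i0, i1] t.2.2.1) (![i0, i1] t.2.2.2) ψ := by
    intro ψ
    have hsh : ∀ j, ((sphereMap (hadU i0 i1 hne) ψ : Sp n) : E n) j = hadFun i0 i1 ψ.1 j :=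
      fun j => rfl
    show hadFun i0 i1 ψ.1 i0 * (starRingEnd ℂ) (hadFun i0 i1 ψ.1 i0)
        * (hadFun i0 i1 ψ.1 i0 * (starRingEnd ℂ) (hadFun i0 i1 ψ.1 i0)) = _
    rw [hadFun_i0]
    have hc : (starRingEnd ℂ) ((ψ.1 i0 + ψ.1 i1) / (Real.sqrt 2 : ℂ))
        = ((starRingEnd ℂ) (ψ.1 i0) + (starRingEnd ℂ) (ψ.1 i1)) / (Real.sqrt 2 : ℂ) := by
      rw [map_div₀, _root_.map_add, Complex.conj_ofReal]
    rw [hc, div_mul_div_comm, hs2, div_mul_div_comm]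
    unfold mono
    rw [Fintype.sum_prod_type]
    simp only [Fintype.sum_prod_type, Fin.sum_univ_two,
      Matrix.cons_val_zero, Matrix.cons_val_one, Matrix.head_cons]
    ring
  have key : mom μ i0 i0 i0 i0 = ∑ t : Fin 2 × Fin 2 × Fin 2 × Fin 2,
      (1/4 : ℂ) * mom μ (![i0, i1] t.1) (![i0, i1] t.2.1) (![i0, i1] t.2.2.1) (![i0, i1] t.2.2.2) := by
    rw [mom, ← integral_comp_U μ hinv (hadU i0 i1 hne) _ (continuous_mono i0 i0 i0 i0)]
    simp_rw [hpt]
    rw [integral_finset_sum _ (fun t _ => ((integrable_mono μ _ _ _ _).const_mul _))]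
    apply Finset.sum_congr rfl
    intro t _
    rw [integral_const_mul]
    rfl
  have v : ∀ a b c d : Fin n, ¬((a = b ∧ c = d) ∨ (a = d ∧ c = b)) → mom μ a b c d = 0 :=
    fun a b c d h => mom_vanish μ hinv a b c d h
  have hne' : i1 ≠ i0 := Ne.symm hne
  rw [Fintype.sum_prod_type] at key
  simp only [Fintype.sum_prod_type, Fin.sum_univ_two,
    Matrix.cons_val_zero, Matrix.cons_val_one, Matrix.head_cons] at key
  rw [v i0 i0 i0 i1 (by simp [hne, hne']), v i0 i0 i1 i0 (by simp [hne, hne']),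
      v i0 i1 i0 i0 (by simp [hne, hne']), v i1 i0 i0 i0 (by simp [hne, hne']),
      v i0 i1 i1 i1 (by simp [hne, hne']), v i1 i0 i1 i1 (by simp [hne, hne']),
      v i1 i1 i0 i1 (by simp [hne, hne']), v i1 i1 i1 i0 (by simp [hne, hne']),
      v i0 i1 i0 i1 (by simp [hne, hne']), v i1 i0 i1 i0 (by simp [hne, hne']),
      mom_swap1 μ i0 i1, mom_swap2 μ i0 i1, mom_swap3 μ i0 i1] at key
  linear_combination 4 * key

lemma mom_norm : ∑ a : Fin n, ∑ c : Fin n, mom μ a a c c = 1 := by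
  have h1 : ∀ a : Fin n, ∑ c, mom μ a a c c = ∫ ψ, ∑ c, mono a a c c ψ ∂μ := fun a =>
    (integral_finset_sum _ fun c _ => integrable_mono μ a a c c).symm
  simp_rw [h1]
  rw [← integral_finset_sum _ (fun a _ =>
    integrable_finset_sum _ (fun c _ => integrable_mono μ a a c c))]
  have h2 : ∀ ψ : Sp n, ∑ a : Fin n, ∑ c : Fin n, mono a a c c ψ = 1 := by
    intro ψ
    have hs := sum_conj ψ
    calc ∑ a : Fin n, ∑ c : Fin n, mono a a c c ψ
        = (∑ a, (ψ : E n) a * (starRingEnd ℂ) ((ψ : E n) a))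
          * (∑ c, (ψ : E n) c * (starRingEnd ℂ) ((ψ : E n) c)) := by
          rw [Finset.sum_mul_sum]
          rfl
      _ = 1 := by rw [hs, one_mul]
  simp_rw [h2]
  simp

lemma mom_formula (hinv : Inv μ) (hn : n ≠ 0) (a b c d : Fin n) :
    mom μ a b c d = ((if a = b then (1:ℂ) else 0) * (if c = d then (1:ℂ) else 0)
      + (if a = d then (1:ℂ) else 0) * (if c = b then (1:ℂ) else 0))
      / ((n:ℂ) * ((n:ℂ) + 1)) := by
  classical
  have hN0 : (n:ℂ) ≠ 0 := Nat.cast_ne_zero.mpr hn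
  have hN1 : (n:ℂ) + 1 ≠ 0 := by
    have : ((n+1 : ℕ) : ℂ) ≠ 0 := Nat.cast_ne_zero.mpr (Nat.succ_ne_zero n)
    push_cast at this
    exact this
  by_cases hm : ((a = b ∧ c = d) ∨ (a = d ∧ c = b))
  · by_cases hone : n = 1
    · subst hone
      have hnorm := mom_norm μ
      simp only [Fin.sum_univ_one] at hnorm
      have ea : a = 0 := Subsingleton.elim a 0
      have eb : b = 0 := Subsingleton.elim b 0
      have ec : c = 0 := Subsingleton.elim c 0
      have ed : d = 0 := Subsingleton.elim d 0
      subst ea; subst eb; subst ec; subst ed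
      rw [hnorm]
      norm_num
    · have hdiag : ∀ i j : Fin n, mom μ i i i i = mom μ j j j j := by
        intro i j
        by_cases hij : i = j
        · rw [hij]
        · have r1 := had_rel μ hinv i j hij
          have r2 := had_rel μ hinv j i (Ne.symm hij)
          rw [mom_swap3 μ i j] at r2
          linear_combination (r1 - r2) / 4
      have hq : ∀ i j : Fin n, i ≠ j → mom μ i i j j = mom μ i i i i / 2 := by
        intro i j hij
        have r1 := had_rel μ hinv i j hij
        have hd := hdiag j i
        linear_combination (-1/4 : ℂ) * r1 + (-1/4 : ℂ) * hd
      have hp : ∀ i : Fin n, mom μ i i i i = 2 / ((n:ℂ) * ((n:ℂ) + 1)) := by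
        intro i
        have hnorm := mom_norm μ
        have hsum : ∀ x : Fin n, ∑ c : Fin n, mom μ x x c c
            = (n:ℂ) * (mom μ i i i i / 2) + mom μ i i i i / 2 := by
          intro x
          have hterm : ∀ c : Fin n, mom μ x x c c
              = (if c = x then mom μ i i i i / 2 else 0) + mom μ i i i i / 2 := by
            intro c
            by_cases hcx : c = x
            · subst hcx
              rw [if_pos rfl, hdiag c i]
              ring
            · simp only [if_neg hcx, zero_add]
              rw [hq x c (fun h => hcx h.symm), hdiag x i]
          rw [Finset.sum_congr rfl (fun c _ => hterm c), Finset.sum_add_distrib,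
            Finset.sum_ite_eq' Finset.univ x (fun _ => mom μ i i i i / 2),
            Finset.sum_const, Finset.card_univ, Fintype.card_fin]
          simp only [nsmul_eq_mul, Finset.mem_univ, if_true]
          ring
        rw [Finset.sum_congr rfl (fun x _ => hsum x), Finset.sum_const,
          Finset.card_univ, Fintype.card_fin, nsmul_eq_mul] at hnorm
        field_simp at hnorm ⊢
        linear_combination hnorm
      rcases hm with ⟨hab, hcd⟩ | ⟨had, hcb⟩
      · subst hab; subst hcd
        by_cases hac : a = c
        · subst hac
          simp only [if_pos rfl]
          rw [hp a]
          norm_num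
        · simp only [if_pos rfl, if_neg hac, if_neg (Ne.symm hac), ↓reduceIte]
          rw [hq a c hac, hp a]
          field_simp
          ring
      · subst had; subst hcb
        rw [mom_swap1 μ a c]
        by_cases hac : a = c
        · subst hac
          simp only [if_pos rfl]
          rw [hp a]
          norm_num
        · simp only [if_pos rfl, if_neg hac, if_neg (Ne.symm hac), ↓reduceIte]
          rw [hq a c hac, hp a]
          field_simp
          ring
  · rw [mom_vanish μ hinv a b c d hm]
    have e1 : (if a = b then (1:ℂ) else 0) * (if c = d then (1:ℂ) else 0) = 0 := by
      by_cases h : a = b <;> by_cases h2 : c = d <;> simp [h, h2]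
      exact absurd (Or.inl ⟨h, h2⟩) hm
    have e2 : (if a = d then (1:ℂ) else 0) * (if c = b then (1:ℂ) else 0) = 0 := by
      by_cases h : a = d <;> by_cases h2 : c = b <;> simp [h, h2]
      exact absurd (Or.inr ⟨h, h2⟩) hm
    rw [e1, e2]
    simp

end Moments

namespace SMD

variable {n k : ℕ}

def mix (S : Finset (Fin k)) (u v : Fin k → Fin n) : Fin k → Fin n :=
  fun j => if j ∈ S then u j else v j

def glue (T : Finset (Fin k)) (e : {j : Fin k // j ∈ T} → Fin n)
    (x : {j : Fin k // j ∉ T} → Fin n) : Fin k → Fin n :=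
  fun j => if h : j ∈ T then e ⟨j, h⟩ else x ⟨j, h⟩

lemma pt_apply (T : Finset (Fin k)) (X : Matrix (Fin k → Fin n) (Fin k → Fin n) ℂ)
    (x y : {j : Fin k // j ∉ T} → Fin n) :
    partialTrace T X x y = ∑ e : {j : Fin k // j ∈ T} → Fin n, X (glue T e x) (glue T e y) := rfl

lemma pt_herm {Δ : Matrix (Fin k → Fin n) (Fin k → Fin n) ℂ} (hΔ : Δ.IsHermitian)
    (T : Finset (Fin k)) : (partialTrace T Δ)ᴴ = partialTrace T Δ := by
  ext x y
  rw [Matrix.conjTranspose_apply, pt_apply, pt_apply, star_sum]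
  apply Finset.sum_congr rfl
  intro e _
  rw [← Matrix.conjTranspose_apply]
  exact congrFun (congrFun hΔ _) _

lemma boole_mul_boole (P Q : Prop) [Decidable P] [Decidable Q] [Decidable (P ∧ Q)] :
    (if P then (1:ℂ) else 0) * (if Q then (1:ℂ) else 0) = if P ∧ Q then 1 else 0 := by
  by_cases hP : P <;> by_cases hQ : Q <;> simp [hP, hQ]

lemma eq_mix_iff (S : Finset (Fin k)) (b c a : Fin k → Fin n) :
    ((∀ j ∈ S, c j = b j) ∧ ∀ j ∈ Finset.univ \ S, a j = b j) ↔ b = mix S c a := by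
  constructor
  · rintro ⟨h1, h2⟩
    funext j
    by_cases hj : j ∈ S
    · rw [mix, if_pos hj, h1 j hj]
    · rw [mix, if_neg hj, h2 j (by simp [hj])]
  · rintro rfl
    constructor
    · intro j hj; rw [mix, if_pos hj]
    · intro j hj
      rw [Finset.mem_sdiff] at hj
      rw [mix, if_neg hj.2]

lemma hsplit (S : Finset (Fin k)) (a b c d : Fin k → Fin n) :
    (∏ j ∈ S, ((if a j = d j then (1:ℂ) else 0) * (if c j = b j then (1:ℂ) else 0)))
      * ∏ j ∈ Finset.univ \ S, ((if a j = b j then (1:ℂ) else 0) * (if c j = d j then (1:ℂ) else 0))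
    = (if b = mix S c a then (1:ℂ) else 0) * (if d = mix S a c then (1:ℂ) else 0) := by
  rw [Finset.prod_mul_distrib, Finset.prod_mul_distrib, Finset.prod_boole, Finset.prod_boole,
    Finset.prod_boole, Finset.prod_boole, boole_mul_boole, boole_mul_boole, boole_mul_boole,
    boole_mul_boole]
  apply if_congr _ rfl rfl
  constructor
  · rintro ⟨⟨h1, h2⟩, h3, h4⟩
    exact ⟨(eq_mix_iff S b c a).1 ⟨h2, h3⟩, (eq_mix_iff S d a c).1 ⟨h1, h4⟩⟩
  · rintro ⟨hb, hd⟩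
    obtain ⟨h2, h3⟩ := (eq_mix_iff S b c a).2 hb
    obtain ⟨h1, h4⟩ := (eq_mix_iff S d a c).2 hd
    exact ⟨⟨h1, h2⟩, h3, h4⟩

variable (Δ : Matrix (Fin k → Fin n) (Fin k → Fin n) ℂ)

lemma collapse (S : Finset (Fin k)) :
    ∑ p : (Fin k → Fin n) × (Fin k → Fin n), ∑ q : (Fin k → Fin n) × (Fin k → Fin n),
      Δ p.1 p.2 * Δ q.1 q.2 *
        ((∏ j ∈ S, ((if p.1 j = q.2 j then (1:ℂ) else 0) * (if q.1 j = p.2 j then (1:ℂ) else 0)))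
          * ∏ j ∈ Finset.univ \ S,
              ((if p.1 j = p.2 j then (1:ℂ) else 0) * (if q.1 j = q.2 j then (1:ℂ) else 0)))
    = ∑ a : Fin k → Fin n, ∑ c : Fin k → Fin n, Δ a (mix S c a) * Δ c (mix S a c) := by
  rw [Fintype.sum_prod_type]
  apply Finset.sum_congr rfl
  intro a _
  have hq : ∀ b : Fin k → Fin n,
      ∑ q : (Fin k → Fin n) × (Fin k → Fin n), Δ a b * Δ q.1 q.2 *
        ((∏ j ∈ S, ((if a j = q.2 j then (1:ℂ) else 0) * (if q.1 j = b j then (1:ℂ) else 0)))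
          * ∏ j ∈ Finset.univ \ S,
              ((if a j = b j then (1:ℂ) else 0) * (if q.1 j = q.2 j then (1:ℂ) else 0)))
      = ∑ c : Fin k → Fin n, ∑ d : Fin k → Fin n, (Δ a b * (if b = mix S c a then (1:ℂ) else 0))
          * (Δ c d * (if d = mix S a c then (1:ℂ) else 0)) := by
    intro b
    rw [Fintype.sum_prod_type]
    apply Finset.sum_congr rfl
    intro c _
    apply Finset.sum_congr rfl
    intro d _
    rw [hsplit S a b c d]
    ring
  rw [Finset.sum_congr rfl fun b _ => hq b]
  rw [Finset.sum_comm]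
  apply Finset.sum_congr rfl
  intro c _
  rw [← Finset.sum_mul_sum]
  have e1 : ∑ b : Fin k → Fin n, Δ a b * (if b = mix S c a then (1:ℂ) else 0) = Δ a (mix S c a) := by
    simp [mul_ite]
  have e2 : ∑ d : Fin k → Fin n, Δ c d * (if d = mix S a c then (1:ℂ) else 0) = Δ c (mix S a c) := by
    simp [mul_ite]
  rw [e1, e2]

lemma trace_side (hΔ : Δ.IsHermitian) (T : Finset (Fin k)) :
    ((partialTrace T Δ)ᴴ * partialTrace T Δ).trace
    = ∑ x : {j : Fin k // j ∉ T} → Fin n, ∑ y : {j : Fin k // j ∉ T} → Fin n,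
        ∑ e : {j : Fin k // j ∈ T} → Fin n, ∑ f : {j : Fin k // j ∈ T} → Fin n,
          Δ (glue T e x) (glue T e y) * Δ (glue T f y) (glue T f x) := by
  rw [pt_herm hΔ T, Matrix.trace]
  apply Finset.sum_congr rfl
  intro x _
  rw [Matrix.diag_apply, Matrix.mul_apply]
  apply Finset.sum_congr rfl
  intro y _
  rw [pt_apply, pt_apply, Finset.sum_mul_sum]

lemma reindex (S : Finset (Fin k)) :
    ∑ a : Fin k → Fin n, ∑ c : Fin k → Fin n, Δ a (mix S c a) * Δ c (mix S a c)
    = ∑ x : {j : Fin k // j ∉ Sᶜ} → Fin n, ∑ y : {j : Fin k // j ∉ Sᶜ} → Fin n,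
        ∑ e : {j : Fin k // j ∈ Sᶜ} → Fin n, ∑ f : {j : Fin k // j ∈ Sᶜ} → Fin n,
          Δ (glue Sᶜ e x) (glue Sᶜ e y) * Δ (glue Sᶜ f y) (glue Sᶜ f x) := by
  classical
  have hsymm : ∀ (e : {j : Fin k // j ∈ Sᶜ} → Fin n) (x : {j : Fin k // j ∉ Sᶜ} → Fin n),
      (Equiv.piEquivPiSubtypeProd (fun j : Fin k => j ∈ Sᶜ) (fun _ => Fin n)).symm (e, x)
        = glue Sᶜ e x := by
    intro e x
    funext j
    rw [Equiv.piEquivPiSubtypeProd_symm_apply]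
    rfl
  have hmix : ∀ (e f : {j : Fin k // j ∈ Sᶜ} → Fin n) (x y : {j : Fin k // j ∉ Sᶜ} → Fin n),
      mix S (glue Sᶜ f y) (glue Sᶜ e x) = glue Sᶜ e y := by
    intro e f x y
    funext j
    by_cases hj : j ∈ S
    · have hjc : j ∉ Sᶜ := by simp [hj]
      rw [mix, if_pos hj, glue, dif_neg hjc, glue, dif_neg hjc]
    · have hjc : j ∈ Sᶜ := by simp [hj]
      rw [mix, if_neg hj, glue, dif_pos hjc, glue, dif_pos hjc]
  calc ∑ a : Fin k → Fin n, ∑ c : Fin k → Fin n, Δ a (mix S c a) * Δ c (mix S a c)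
      = ∑ u : ({j : Fin k // j ∈ Sᶜ} → Fin n) × ({j : Fin k // j ∉ Sᶜ} → Fin n),
          ∑ c : Fin k → Fin n,
            Δ ((Equiv.piEquivPiSubtypeProd (fun j : Fin k => j ∈ Sᶜ) (fun _ => Fin n)).symm u)
              (mix S c ((Equiv.piEquivPiSubtypeProd (fun j : Fin k => j ∈ Sᶜ) (fun _ => Fin n)).symm u))
            * Δ c (mix S ((Equiv.piEquivPiSubtypeProd (fun j : Fin k => j ∈ Sᶜ) (fun _ => Fin n)).symm u) c) :=
        (Equiv.sum_comp (Equiv.piEquivPiSubtypeProd (fun j : Fin k => j ∈ Sᶜ) (fun _ => Fin n)).symm _).symm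
    _ = ∑ u : ({j : Fin k // j ∈ Sᶜ} → Fin n) × ({j : Fin k // j ∉ Sᶜ} → Fin n),
        ∑ v : ({j : Fin k // j ∈ Sᶜ} → Fin n) × ({j : Fin k // j ∉ Sᶜ} → Fin n),
          Δ ((Equiv.piEquivPiSubtypeProd (fun j : Fin k => j ∈ Sᶜ) (fun _ => Fin n)).symm u)
              (mix S ((Equiv.piEquivPiSubtypeProd (fun j : Fin k => j ∈ Sᶜ) (fun _ => Fin n)).symm v)
                ((Equiv.piEquivPiSubtypeProd (fun j : Fin k => j ∈ Sᶜ) (fun _ => Fin n)).symm u))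
            * Δ ((Equiv.piEquivPiSubtypeProd (fun j : Fin k => j ∈ Sᶜ) (fun _ => Fin n)).symm v)
              (mix S ((Equiv.piEquivPiSubtypeProd (fun j : Fin k => j ∈ Sᶜ) (fun _ => Fin n)).symm u)
                ((Equiv.piEquivPiSubtypeProd (fun j : Fin k => j ∈ Sᶜ) (fun _ => Fin n)).symm v)) :=
        Finset.sum_congr rfl fun u _ =>
          (Equiv.sum_comp (Equiv.piEquivPiSubtypeProd (fun j : Fin k => j ∈ Sᶜ) (fun _ => Fin n)).symm _).symm
    _ = ∑ e : {j : Fin k // j ∈ Sᶜ} → Fin n, ∑ x : {j : Fin k // j ∉ Sᶜ} → Fin n,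
        ∑ f : {j : Fin k // j ∈ Sᶜ} → Fin n, ∑ y : {j : Fin k // j ∉ Sᶜ} → Fin n,
          Δ (glue Sᶜ e x) (glue Sᶜ e y) * Δ (glue Sᶜ f y) (glue Sᶜ f x) := by
        rw [Fintype.sum_prod_type]
        apply Finset.sum_congr rfl; intro e _
        apply Finset.sum_congr rfl; intro x _
        rw [Fintype.sum_prod_type]
        apply Finset.sum_congr rfl; intro f _
        apply Finset.sum_congr rfl; intro y _
        rw [hsymm e x, hsymm f y, hmix e f x y, hmix f e y x]
    _ = ∑ e : {j : Fin k // j ∈ Sᶜ} → Fin n, ∑ x : {j : Fin k // j ∉ Sᶜ} → Fin n,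
        ∑ y : {j : Fin k // j ∉ Sᶜ} → Fin n, ∑ f : {j : Fin k // j ∈ Sᶜ} → Fin n,
          Δ (glue Sᶜ e x) (glue Sᶜ e y) * Δ (glue Sᶜ f y) (glue Sᶜ f x) :=
        Finset.sum_congr rfl fun e _ => Finset.sum_congr rfl fun x _ => Finset.sum_comm
    _ = ∑ x : {j : Fin k // j ∉ Sᶜ} → Fin n, ∑ e : {j : Fin k // j ∈ Sᶜ} → Fin n,
        ∑ y : {j : Fin k // j ∉ Sᶜ} → Fin n, ∑ f : {j : Fin k // j ∈ Sᶜ} → Fin n,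
          Δ (glue Sᶜ e x) (glue Sᶜ e y) * Δ (glue Sᶜ f y) (glue Sᶜ f x) := Finset.sum_comm
    _ = ∑ x : {j : Fin k // j ∉ Sᶜ} → Fin n, ∑ y : {j : Fin k // j ∉ Sᶜ} → Fin n,
        ∑ e : {j : Fin k // j ∈ Sᶜ} → Fin n, ∑ f : {j : Fin k // j ∈ Sᶜ} → Fin n,
          Δ (glue Sᶜ e x) (glue Sᶜ e y) * Δ (glue Sᶜ f y) (glue Sᶜ f x) :=
        Finset.sum_congr rfl fun x _ => Finset.sum_comm

lemma key_sum (hΔ : Δ.IsHermitian) (S : Finset (Fin k)) :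
    ∑ p : (Fin k → Fin n) × (Fin k → Fin n), ∑ q : (Fin k → Fin n) × (Fin k → Fin n),
      Δ p.1 p.2 * Δ q.1 q.2 *
        ((∏ j ∈ S, ((if p.1 j = q.2 j then (1:ℂ) else 0) * (if q.1 j = p.2 j then (1:ℂ) else 0)))
          * ∏ j ∈ Finset.univ \ S,
              ((if p.1 j = p.2 j then (1:ℂ) else 0) * (if q.1 j = q.2 j then (1:ℂ) else 0)))
    = ((partialTrace Sᶜ Δ)ᴴ * partialTrace Sᶜ Δ).trace := by
  rw [collapse Δ S, reindex Δ S, ← trace_side Δ hΔ Sᶜ]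

lemma sum_compl (f : Finset (Fin k) → ℂ) :
    (∑ S : Finset (Fin k), f Sᶜ) = ∑ S : Finset (Fin k), f S :=
  Fintype.sum_bijective (fun S : Finset (Fin k) => Sᶜ) compl_involutive.bijective _ f (fun _ => rfl)

end SMD

end SM

/-- Multipartite second-moment formula: if `μ` is the uniform (unitarily invariant)
probability measure on the unit sphere of `ℂ^n` and `Δ` is a Hermitian operator on
`(ℂ^n)^{⊗k}`, then
`∫⋯∫ (tr(Δ(|ψ_1⟩⟨ψ_1| ⊗ ⋯ ⊗ |ψ_k⟩⟨ψ_k|)))² dψ_1⋯dψ_k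
   = (n(n+1))^{-k} ∑_{S ⊆ [k]} ‖tr_S Δ‖_2²`. -/
theorem integral_trace_sq_multipartite {n k : ℕ}
    (μ : Measure (Metric.sphere (0 : EuclideanSpace ℂ (Fin n)) 1))
    [IsProbabilityMeasure μ]
    (hinv : ∀ U : EuclideanSpace ℂ (Fin n) ≃ₗᵢ[ℂ] EuclideanSpace ℂ (Fin n),
      Measure.map (fun ψ : Metric.sphere (0 : EuclideanSpace ℂ (Fin n)) 1 =>
        (⟨U ψ.1, by
          rw [mem_sphere_zero_iff_norm, U.norm_map, ← mem_sphere_zero_iff_norm]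
          exact ψ.2⟩ : Metric.sphere (0 : EuclideanSpace ℂ (Fin n)) 1)) μ = μ)
    (Δ : Matrix (Fin k → Fin n) (Fin k → Fin n) ℂ) (hΔ : Δ.IsHermitian) :
    ∫ ψ : Fin k → Metric.sphere (0 : EuclideanSpace ℂ (Fin n)) 1,
        ((Δ * prodProj fun j => (ψ j : EuclideanSpace ℂ (Fin n))).trace) ^ 2
        ∂(Measure.pi fun _ => μ)
      = (∑ S : Finset (Fin k), ((partialTrace S Δ)ᴴ * partialTrace S Δ).trace)
          / ((n : ℂ) * ((n : ℂ) + 1)) ^ k := by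
    classical
  have hn : n ≠ 0 := by
    intro h
    subst h
    have hemp : IsEmpty (Metric.sphere (0 : EuclideanSpace ℂ (Fin 0)) 1) := by
      constructor
      rintro ⟨ψ, hψ⟩
      rw [mem_sphere_zero_iff_norm] at hψ
      rw [Subsingleton.elim ψ 0, norm_zero] at hψ
      exact one_ne_zero hψ.symm
    have h1 : (μ Set.univ) = 1 := measure_univ
    rw [Set.univ_eq_empty_iff.mpr hemp, measure_empty] at h1
    exact zero_ne_one h1
  have hinv' : SM.Inv μ := hinv
  letI : MeasureSpace (SM.Sp n) := ⟨μ⟩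
  haveI : IsProbabilityMeasure (volume : Measure (Fin k → SM.Sp n)) := by
    show IsProbabilityMeasure (Measure.pi fun _ : Fin k => μ)
    infer_instance
  have hvol : (Measure.pi fun _ : Fin k => μ) = (volume : Measure (Fin k → SM.Sp n)) := rfl
  have hpt : ∀ ψ : Fin k → SM.Sp n,
      ((Δ * prodProj fun j => ((ψ j : EuclideanSpace ℂ (Fin n)))).trace) ^ 2
      = ∑ p : (Fin k → Fin n) × (Fin k → Fin n), ∑ q : (Fin k → Fin n) × (Fin k → Fin n),
          Δ p.1 p.2 * Δ q.1 q.2 * ∏ j, SM.mono (p.1 j) (p.2 j) (q.1 j) (q.2 j) (ψ j) := by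
    intro ψ
    have h1 : (Δ * prodProj fun j => ((ψ j : EuclideanSpace ℂ (Fin n)))).trace
        = ∑ p : (Fin k → Fin n) × (Fin k → Fin n), Δ p.1 p.2
            * ∏ j, ((ψ j : EuclideanSpace ℂ (Fin n)) (p.2 j)
              * (starRingEnd ℂ) ((ψ j : EuclideanSpace ℂ (Fin n)) (p.1 j))) := by
      rw [Matrix.trace, Fintype.sum_prod_type]
      apply Finset.sum_congr rfl
      intro a _
      rw [Matrix.diag_apply, Matrix.mul_apply]
      apply Finset.sum_congr rfl
      intro b _
      rfl
    rw [h1, sq, Finset.sum_mul_sum]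
    apply Finset.sum_congr rfl; intro p _
    apply Finset.sum_congr rfl; intro q _
    rw [mul_mul_mul_comm, ← Finset.prod_mul_distrib]
    rfl
  have hcont : ∀ p q : (Fin k → Fin n) × (Fin k → Fin n),
      Continuous (fun ψ : Fin k → SM.Sp n =>
        Δ p.1 p.2 * Δ q.1 q.2 * ∏ j, SM.mono (p.1 j) (p.2 j) (q.1 j) (q.2 j) (ψ j)) := by
    intro p q
    exact continuous_const.mul (continuous_finset_prod _ fun j _ =>
      (SM.continuous_mono _ _ _ _).comp (continuous_apply j))
  have hint : ∀ p q : (Fin k → Fin n) × (Fin k → Fin n),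
      Integrable (fun ψ : Fin k → SM.Sp n =>
        Δ p.1 p.2 * Δ q.1 q.2 * ∏ j, SM.mono (p.1 j) (p.2 j) (q.1 j) (q.2 j) (ψ j)) volume :=
    fun p q => SM.integrable_of_continuous _ (hcont p q)
  have hmom : ∀ p q : (Fin k → Fin n) × (Fin k → Fin n),
      ∏ j, SM.mom μ (p.1 j) (p.2 j) (q.1 j) (q.2 j)
      = (∑ S : Finset (Fin k),
          (∏ j ∈ S, ((if p.1 j = q.2 j then (1:ℂ) else 0)
              * (if q.1 j = p.2 j then (1:ℂ) else 0)))
            * ∏ j ∈ Finset.univ \ S, ((if p.1 j = p.2 j then (1:ℂ) else 0)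
              * (if q.1 j = q.2 j then (1:ℂ) else 0)))
        / ((n:ℂ) * ((n:ℂ) + 1)) ^ k := by
    intro p q
    rw [Finset.prod_congr rfl
      (fun j _ => SM.mom_formula μ hinv' hn (p.1 j) (p.2 j) (q.1 j) (q.2 j))]
    rw [Finset.prod_div_distrib, Finset.prod_const, Finset.card_univ, Fintype.card_fin]
    congr 1
    rw [Finset.prod_congr rfl (fun j _ => add_comm
      ((if p.1 j = p.2 j then (1:ℂ) else 0) * (if q.1 j = q.2 j then (1:ℂ) else 0))
      ((if p.1 j = q.2 j then (1:ℂ) else 0) * (if q.1 j = p.2 j then (1:ℂ) else 0)))]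
    rw [Finset.prod_add, Finset.powerset_univ]
  calc ∫ ψ : Fin k → SM.Sp n,
        ((Δ * prodProj fun j => ((ψ j : EuclideanSpace ℂ (Fin n)))).trace) ^ 2
        ∂(Measure.pi fun _ => μ)
      = ∑ p : (Fin k → Fin n) × (Fin k → Fin n), ∑ q : (Fin k → Fin n) × (Fin k → Fin n),
          Δ p.1 p.2 * Δ q.1 q.2 * ∏ j, SM.mom μ (p.1 j) (p.2 j) (q.1 j) (q.2 j) := by
        rw [hvol]
        simp_rw [hpt]
        rw [integral_finset_sum _ (fun p _ => integrable_finset_sum _ (fun q _ => hint p q))]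
        apply Finset.sum_congr rfl; intro p _
        rw [integral_finset_sum _ (fun q _ => hint p q)]
        apply Finset.sum_congr rfl; intro q _
        rw [integral_const_mul]
        congr 1
        exact integral_fintype_prod_eq_prod
          (fun j x => SM.mono (p.1 j) (p.2 j) (q.1 j) (q.2 j) x)
    _ = ∑ p : (Fin k → Fin n) × (Fin k → Fin n), ∑ q : (Fin k → Fin n) × (Fin k → Fin n),
          ∑ S : Finset (Fin k),
            (Δ p.1 p.2 * Δ q.1 q.2 *
              ((∏ j ∈ S, ((if p.1 j = q.2 j then (1:ℂ) else 0)
                  * (if q.1 j = p.2 j then (1:ℂ) else 0)))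
                * ∏ j ∈ Finset.univ \ S, ((if p.1 j = p.2 j then (1:ℂ) else 0)
                  * (if q.1 j = q.2 j then (1:ℂ) else 0))))
              / ((n:ℂ) * ((n:ℂ) + 1)) ^ k := by
        apply Finset.sum_congr rfl; intro p _
        apply Finset.sum_congr rfl; intro q _
        rw [hmom p q, ← mul_div_assoc, Finset.mul_sum, Finset.sum_div]
    _ = ∑ S : Finset (Fin k),
          (∑ p : (Fin k → Fin n) × (Fin k → Fin n), ∑ q : (Fin k → Fin n) × (Fin k → Fin n),
            Δ p.1 p.2 * Δ q.1 q.2 *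
              ((∏ j ∈ S, ((if p.1 j = q.2 j then (1:ℂ) else 0)
                  * (if q.1 j = p.2 j then (1:ℂ) else 0)))
                * ∏ j ∈ Finset.univ \ S, ((if p.1 j = p.2 j then (1:ℂ) else 0)
                  * (if q.1 j = q.2 j then (1:ℂ) else 0))))
            / ((n:ℂ) * ((n:ℂ) + 1)) ^ k := by
        rw [show (∑ p : (Fin k → Fin n) × (Fin k → Fin n),
            ∑ q : (Fin k → Fin n) × (Fin k → Fin n), ∑ S : Finset (Fin k),
            (Δ p.1 p.2 * Δ q.1 q.2 *
              ((∏ j ∈ S, ((if p.1 j = q.2 j then (1:ℂ) else 0)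
                  * (if q.1 j = p.2 j then (1:ℂ) else 0)))
                * ∏ j ∈ Finset.univ \ S, ((if p.1 j = p.2 j then (1:ℂ) else 0)
                  * (if q.1 j = q.2 j then (1:ℂ) else 0))))
              / ((n:ℂ) * ((n:ℂ) + 1)) ^ k)
            = ∑ S : Finset (Fin k), ∑ p : (Fin k → Fin n) × (Fin k → Fin n),
                ∑ q : (Fin k → Fin n) × (Fin k → Fin n),
            (Δ p.1 p.2 * Δ q.1 q.2 *
              ((∏ j ∈ S, ((if p.1 j = q.2 j then (1:ℂ) else 0)
                  * (if q.1 j = p.2 j then (1:ℂ) else 0)))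
                * ∏ j ∈ Finset.univ \ S, ((if p.1 j = p.2 j then (1:ℂ) else 0)
                  * (if q.1 j = q.2 j then (1:ℂ) else 0))))
              / ((n:ℂ) * ((n:ℂ) + 1)) ^ k from by
          rw [Finset.sum_congr rfl (fun p _ => Finset.sum_comm), Finset.sum_comm]]
        apply Finset.sum_congr rfl; intro S _
        rw [Finset.sum_div]
        apply Finset.sum_congr rfl; intro p _
        rw [Finset.sum_div]
    _ = ∑ S : Finset (Fin k),
          ((partialTrace Sᶜ Δ)ᴴ * partialTrace Sᶜ Δ).trace / ((n:ℂ) * ((n:ℂ) + 1)) ^ k := by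
        apply Finset.sum_congr rfl; intro S _
        rw [SM.SMD.key_sum Δ hΔ S]
    _ = (∑ S : Finset (Fin k), ((partialTrace S Δ)ᴴ * partialTrace S Δ).trace)
          / ((n : ℂ) * ((n : ℂ) + 1)) ^ k := by
        rw [← Finset.sum_div]
        congr 1
        exact SM.SMD.sum_compl
          (fun T => ((partialTrace T Δ)ᴴ * partialTrace T Δ).trace)
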